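/- (Sturm's Theorem) Let f be a non-constant real polynomial, a < b real numbers neither of which is a multiple root of f. Then the number of distinct real roots of f in (a, b] equals V_f(a) − V_f(b), where V_f(x) is the number of sign variations of the canonical Sturm chain f₀(x), …, f_m(x) evaluated at x, with zeros deleted before counting variations. -/

import Mathlib

open Polynomial

/-- Number of sign changes in a list of reals (adjacent pairs of opposite sign). -/
noncomputable def signChanges : List ℝ → ℕ
  | a :: b :: t => (if a * b < 0 then 1 else 0) + signChanges (b :: t)
  | _ => 0

/-- Number of sign variations of a real sequence: zeros are deleted first. -/
noncomputable def signVar (l : List ℝ) : ℕ :=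
  signChanges (l.filter fun x => @decide (x ≠ 0) (Classical.propDecidable _))

namespace Sturm
open Filter Set

lemma filter_cons_ne (a : ℝ) (l : List ℝ) (ha : a ≠ 0) :
    ((a :: l).filter fun x => @decide (x ≠ 0) (Classical.propDecidable _))
      = a :: (l.filter fun x => @decide (x ≠ 0) (Classical.propDecidable _)) :=
  List.filter_cons_of_pos (by simp [ha])

lemma filter_cons_zero (l : List ℝ) :
    (((0:ℝ) :: l).filter fun x => @decide (x ≠ 0) (Classical.propDecidable _))
      = l.filter fun x => @decide (x ≠ 0) (Classical.propDecidable _) :=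
  List.filter_cons_of_neg (by simp)

lemma signChanges_nil : signChanges [] = 0 := rfl

lemma signChanges_single (x : ℝ) : signChanges [x] = 0 := rfl

lemma signChanges_cons_cons (x y : ℝ) (l : List ℝ) :
    signChanges (x :: y :: l) = (if x * y < 0 then 1 else 0) + signChanges (y :: l) := rfl

lemma signVar_nil : signVar [] = 0 := rfl

lemma signVar_single (x : ℝ) : signVar [x] = 0 := by
  by_cases hx : x = 0 <;> simp [signVar, List.filter, hx, signChanges]

lemma signVar_cons_zero (l : List ℝ) : signVar ((0:ℝ) :: l) = signVar l := by
  simp [signVar, filter_cons_zero]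

lemma signVar_cons_cons (x y : ℝ) (l : List ℝ) (hx : x ≠ 0) (hy : y ≠ 0) :
    signVar (x :: y :: l) = (if x * y < 0 then 1 else 0) + signVar (y :: l) := by
  simp only [signVar, filter_cons_ne _ _ hx, filter_cons_ne _ _ hy, signChanges_cons_cons]

lemma signVar_cons_mid_zero (x : ℝ) (l : List ℝ) (hx : x ≠ 0) :
    signVar (x :: (0:ℝ) :: l) = signVar (x :: l) := by
  simp only [signVar, filter_cons_ne _ _ hx, filter_cons_zero]

lemma sign_iff {u0 u1 v0 v1 : ℝ} (h0 : 0 < u0 * v0) (h1 : 0 < u1 * v1) :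
    (u0 * u1 < 0 ↔ v0 * v1 < 0) := by
  constructor <;> intro h <;> nlinarith [mul_pos h0 h1]

lemma chi_split {u0 u2 v0 v1 v2 : ℝ} (h0 : 0 < u0 * v0) (h2 : 0 < u2 * v2)
    (hop : u0 * u2 < 0) (hv1 : v1 ≠ 0) :
    ((if v0 * v1 < 0 then 1 else 0) + (if v1 * v2 < 0 then 1 else 0) : ℕ) = 1 := by
  have hv02 : v0 * v2 < 0 := by nlinarith [mul_pos h0 h2]
  rcases mul_neg_iff.1 hv02 with ⟨h0', h2'⟩ | ⟨h0', h2'⟩ <;>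
    rcases lt_or_gt_of_ne hv1 with h | h
  · simp [mul_neg_of_pos_of_neg h0' h, not_lt.2 (le_of_lt (mul_pos_of_neg_of_neg h h2'))]
  · simp [not_lt.2 (le_of_lt (mul_pos h0' h)), mul_neg_of_pos_of_neg h h2']
  · simp [not_lt.2 (le_of_lt (mul_pos_of_neg_of_neg h0' h)), mul_neg_of_neg_of_pos h h2']
  · simp [mul_neg_of_neg_of_pos h0' h, not_lt.2 (le_of_lt (mul_pos h h2'))]


/-- the evaluation list of a chain of length n+1 -/
noncomputable def lst (n : ℕ) (u : ℕ → ℝ) : List ℝ :=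
  List.ofFn (fun j : Fin (n+1) => u j)

lemma lst_zero (u : ℕ → ℝ) : lst 0 u = [u 0] := rfl

lemma lst_eq (n : ℕ) (u : ℕ → ℝ) :
    lst n u = u 0 :: List.ofFn (fun j : Fin n => u (j+1)) := by
  simp [lst, List.ofFn_succ]

lemma lst_succ (n : ℕ) (u : ℕ → ℝ) :
    lst (n+1) u = u 0 :: lst n (fun j => u (j+1)) := by
  rw [lst_eq, lst_eq]
  simp [lst, List.ofFn_succ]

lemma lst2 (n : ℕ) (u : ℕ → ℝ) :
    lst (n+2) u = u 0 :: u 1 :: lst n (fun j => u (j+2)) := by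
  rw [lst_succ, lst_succ]

lemma signVar_cons_lst (x : ℝ) (n : ℕ) (u : ℕ → ℝ) (hx : x ≠ 0) (hu0 : u 0 ≠ 0) :
    signVar (x :: lst n u) = (if x * u 0 < 0 then 1 else 0) + signVar (lst n u) := by
  rw [lst_eq n u, signVar_cons_cons _ _ _ hx hu0, ← lst_eq]

lemma core : ∀ n : ℕ, ∀ u v : ℕ → ℝ, u 0 ≠ 0 → (∀ i, i ≤ n → v i ≠ 0) →
    (∀ i, i ≤ n → u i ≠ 0 → 0 < u i * v i) →
    (∀ i, 1 ≤ i → i ≤ n → u i = 0 → i < n ∧ u (i-1) * u (i+1) < 0) →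
    signVar (lst n u) = signVar (lst n v) := by
  intro n
  induction n using Nat.strong_induction_on with
  | _ n IH =>
    intro u v hu0 hv hs hz
    match n with
    | 0 => rw [lst_zero, lst_zero, signVar_single, signVar_single]
    | Nat.succ k =>
      have hv0 : v 0 ≠ 0 := hv 0 (by omega)
      have hv1 : v 1 ≠ 0 := hv 1 (by omega)
      by_cases hu1 : u 1 = 0
      · -- u 1 = 0 : then k ≥ 1 and u 0 * u 2 < 0
        obtain ⟨hlt, hop⟩ := hz 1 le_rfl (by omega) hu1
        simp only [show (1:ℕ)-1 = 0 from rfl, show (1:ℕ)+1 = 2 from rfl] at hop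
        match k, hlt with
        | Nat.succ k', _ =>
          have hu2 : u 2 ≠ 0 := by
            intro h; rw [h, mul_zero] at hop; exact lt_irrefl 0 hop
          have hv2 : v 2 ≠ 0 := hv 2 (by omega)
          have hIH := IH k' (by omega) (fun j => u (j+2)) (fun j => v (j+2))
            hu2 (fun i hi => hv (i+2) (by omega))
            (fun i hi h => hs (i+2) (by omega) h)
            (fun i h1 h2' h => by
              obtain ⟨hlt', hop'⟩ := hz (i+2) (by omega) (by omega) h
              refine ⟨by omega, ?_⟩
              have e1 : i + 2 - 1 = (i - 1) + 2 := by omega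
              have e2 : i + 2 + 1 = (i + 1) + 2 := by omega
              rw [e1, e2] at hop'; exact hop')
          have h0 : 0 < u 0 * v 0 := hs 0 (by omega) hu0
          have h2 : 0 < u 2 * v 2 := hs 2 (by omega) hu2
          rw [show k'.succ.succ = k' + 2 from rfl, lst2 k' u, lst2 k' v, hu1,
            signVar_cons_mid_zero _ _ hu0,
            signVar_cons_lst _ _ _ hu0 hu2,
            signVar_cons_cons _ _ _ hv0 hv1,
            signVar_cons_lst _ _ _ hv1 hv2]
          norm_num [hIH, if_pos hop, ← Nat.add_assoc, chi_split h0 h2 hop hv1]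
      · -- u 1 ≠ 0
        have h0 : 0 < u 0 * v 0 := hs 0 (by omega) hu0
        have h1 : 0 < u 1 * v 1 := hs 1 (by omega) hu1
        have hIH := IH k (by omega) (fun j => u (j+1)) (fun j => v (j+1))
          hu1 (fun i hi => hv (i+1) (by omega))
          (fun i hi h => hs (i+1) (by omega) h)
          (fun i hi1 hik h => by
            obtain ⟨hlt', hop'⟩ := hz (i+1) (by omega) (by omega) h
            refine ⟨by omega, ?_⟩
            have e1 : i + 1 - 1 = (i - 1) + 1 := by omega
            have e2 : i + 1 + 1 = (i + 1) + 1 := by omega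
            rw [e1, e2] at hop'; exact hop')
        rw [show k.succ = k + 1 from rfl, lst_succ k u, lst_succ k v,
          signVar_cons_lst _ _ _ hu0 hu1, signVar_cons_lst _ _ _ hv0 hv1,
          hIH, if_congr (sign_iff h0 h1) rfl rfl]


lemma u1_ne {n : ℕ} {u : ℕ → ℝ} (hn : 1 ≤ n) (hu0 : u 0 = 0)
    (hz : ∀ i, 1 ≤ i → i ≤ n → u i = 0 → i < n ∧ u (i-1) * u (i+1) < 0) : u 1 ≠ 0 := by
  intro h
  obtain ⟨-, hop⟩ := hz 1 le_rfl hn h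
  rw [show (1:ℕ)-1 = 0 from rfl, hu0, zero_mul] at hop
  exact lt_irrefl 0 hop

lemma shift_hz {n : ℕ} {u : ℕ → ℝ}
    (hz : ∀ i, 1 ≤ i → i ≤ n + 1 → u i = 0 → i < n + 1 ∧ u (i-1) * u (i+1) < 0) :
    ∀ i, 1 ≤ i → i ≤ n → (fun j => u (j+1)) i = 0 →
      i < n ∧ (fun j => u (j+1)) (i-1) * (fun j => u (j+1)) (i+1) < 0 := by
  intro i hi1 hin h
  obtain ⟨hlt, hop⟩ := hz (i+1) (by omega) (by omega) h
  refine ⟨by omega, ?_⟩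
  have e1 : i + 1 - 1 = (i - 1) + 1 := by omega
  rw [e1] at hop; exact hop

lemma varCompare_right (n : ℕ) (hn : 1 ≤ n) (u v : ℕ → ℝ)
    (hv : ∀ i, i ≤ n → v i ≠ 0)
    (hs : ∀ i, i ≤ n → u i ≠ 0 → 0 < u i * v i)
    (hz : ∀ i, 1 ≤ i → i ≤ n → u i = 0 → i < n ∧ u (i-1) * u (i+1) < 0)
    (h00 : u 0 = 0 → 0 < v 0 * v 1) :
    signVar (lst n u) = signVar (lst n v) := by
  by_cases hu0 : u 0 = 0
  · obtain ⟨k, rfl⟩ : ∃ k, n = k + 1 := ⟨n - 1, by omega⟩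
    have hu1 : u 1 ≠ 0 := u1_ne hn hu0 hz
    have hv0 : v 0 ≠ 0 := hv 0 (by omega)
    have hv1 : v 1 ≠ 0 := hv 1 (by omega)
    rw [lst_succ k u, lst_succ k v, hu0, signVar_cons_zero,
      signVar_cons_lst _ _ _ hv0 hv1, if_neg (not_lt.2 (le_of_lt (h00 hu0)))]
    rw [zero_add]
    exact core k _ _ hu1 (fun i hi => hv (i+1) (by omega))
      (fun i hi h => hs (i+1) (by omega) h) (shift_hz hz)
  · exact core n u v hu0 hv hs hz

lemma varCompare_left (n : ℕ) (hn : 1 ≤ n) (u v : ℕ → ℝ)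
    (hv : ∀ i, i ≤ n → v i ≠ 0)
    (hs : ∀ i, i ≤ n → u i ≠ 0 → 0 < u i * v i)
    (hz : ∀ i, 1 ≤ i → i ≤ n → u i = 0 → i < n ∧ u (i-1) * u (i+1) < 0)
    (h00 : u 0 = 0 → v 0 * v 1 < 0) :
    signVar (lst n v) = signVar (lst n u) + (if u 0 = 0 then 1 else 0) := by
  by_cases hu0 : u 0 = 0
  · obtain ⟨k, rfl⟩ : ∃ k, n = k + 1 := ⟨n - 1, by omega⟩
    have hu1 : u 1 ≠ 0 := u1_ne hn hu0 hz
    have hv0 : v 0 ≠ 0 := hv 0 (by omega)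
    have hv1 : v 1 ≠ 0 := hv 1 (by omega)
    rw [lst_succ k u, lst_succ k v, hu0, signVar_cons_zero,
      signVar_cons_lst _ _ _ hv0 hv1, if_pos (h00 hu0), if_pos rfl]
    have := core k (fun j => u (j+1)) (fun j => v (j+1)) hu1
      (fun i hi => hv (i+1) (by omega))
      (fun i hi h => hs (i+1) (by omega) h) (shift_hz hz)
    omega
  · rw [if_neg hu0, Nat.add_zero]
    exact (core n u v hu0 hv hs hz).symm


lemma signChanges_map_mul (c : ℝ) (hc : c ≠ 0) : ∀ l : List ℝ, signChanges (l.map (c * ·)) = signChanges l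
  | [] => rfl
  | [x] => rfl
  | x :: y :: t => by
    rw [List.map_cons, List.map_cons]
    show signChanges (c * x :: c * y :: t.map (c * ·)) = _
    show (if c * x * (c * y) < 0 then 1 else 0) + signChanges ((y :: t).map (c * ·))
      = (if x * y < 0 then 1 else 0) + signChanges (y :: t)
    rw [signChanges_map_mul c hc (y :: t)]
    congr 1
    have hiff : c * x * (c * y) < 0 ↔ x * y < 0 := by
      have h2 : 0 < c^2 := by positivity
      constructor <;> intro h <;> nlinarith
    exact if_congr hiff rfl rfl

lemma signVar_map_mul (c : ℝ) (hc : c ≠ 0) (l : List ℝ) :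
    signVar (l.map (c * ·)) = signVar l := by
  unfold signVar
  rw [List.filter_map]
  have : ((fun x => @decide (x ≠ 0) (Classical.propDecidable _)) ∘ (c * ·))
      = fun x : ℝ => @decide (x ≠ 0) (Classical.propDecidable _) := by
    funext x
    exact decide_eq_decide.mpr (by simp [hc])
  rw [this, signChanges_map_mul c hc]

lemma noCommonRoot (m : ℕ) (G d : ℕ → Polynomial ℝ) (hGm : G m = 1)
    (hGrec : ∀ i, 1 ≤ i → i < m → G (i-1) = d i * G i - G (i+1)) (c : ℝ) :
    ∀ i, i < m → ¬((G i).eval c = 0 ∧ (G (i+1)).eval c = 0) := by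
  suffices H : ∀ N, ∀ i, m - i ≤ N → i < m → ¬((G i).eval c = 0 ∧ (G (i+1)).eval c = 0) by
    intro i hi; exact H (m - i) i le_rfl hi
  intro N
  induction N with
  | zero => intro i hN hi; omega
  | succ N IHN =>
    rintro i hN hi ⟨h1, h2⟩
    by_cases h : i + 1 = m
    · rw [h, hGm] at h2; simp at h2
    · have hi1 : i + 1 < m := by omega
      have hr := hGrec (i+1) (by omega) hi1
      rw [Nat.add_sub_cancel] at hr
      have h3 : (G (i+2)).eval c = 0 := by
        have := congrArg (fun p => Polynomial.eval c p) hr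
        simp only [eval_sub, eval_mul, h1, h2, mul_zero, zero_sub] at this
        linarith [this]
      exact IHN (i+1) (by omega) hi1 ⟨h2, h3⟩

lemma interiorZero (m : ℕ) (G d : ℕ → Polynomial ℝ) (hGm : G m = 1)
    (hGrec : ∀ i, 1 ≤ i → i < m → G (i-1) = d i * G i - G (i+1)) (c : ℝ) :
    ∀ i, 1 ≤ i → i ≤ m → (G i).eval c = 0 →
      i < m ∧ (G (i-1)).eval c * (G (i+1)).eval c < 0 := by
  intro i hi1 him hzero
  have hilt : i < m := by
    rcases eq_or_lt_of_le him with h | h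
    · exfalso; rw [h, hGm] at hzero; simp at hzero
    · exact h
  refine ⟨hilt, ?_⟩
  have hnext : (G (i+1)).eval c ≠ 0 := fun h =>
    noCommonRoot m G d hGm hGrec c i hilt ⟨hzero, h⟩
  have hr := hGrec i hi1 hilt
  have heq : (G (i-1)).eval c = -(G (i+1)).eval c := by
    have := congrArg (fun p => Polynomial.eval c p) hr
    simp only [eval_sub, eval_mul, hzero, mul_zero, zero_sub] at this
    exact this
  rw [heq]
  have : 0 < (G (i+1)).eval c * (G (i+1)).eval c := mul_self_pos.2 hnext
  nlinarith


lemma eventually_sign (p : Polynomial ℝ) (c : ℝ) (h : p.eval c ≠ 0) :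
    ∀ᶠ x in nhds c, 0 < p.eval x * p.eval c := by
  have hcont : ContinuousAt (fun x => p.eval x * p.eval c) c :=
    (p.continuous.mul continuous_const).continuousAt
  have hpos : (0:ℝ) < p.eval c * p.eval c := mul_self_pos.2 h
  exact continuousAt_const.eventually_lt hcont hpos

lemma eventually_ne_root (p : Polynomial ℝ) (hp : p ≠ 0) (c : ℝ) :
    ∀ᶠ x in nhdsWithin c {c}ᶜ, p.eval x ≠ 0 := by
  have hfin : ({x | p.IsRoot x} \ {c} : Set ℝ).Finite :=
    (p.finite_setOf_isRoot hp).subset diff_subset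
  have hcl : IsClosed ({x | p.IsRoot x} \ {c} : Set ℝ) := hfin.isClosed
  have h1 : ∀ᶠ x in nhds c, x ∉ ({x | p.IsRoot x} \ {c} : Set ℝ) :=
    hcl.isOpen_compl.eventually_mem (by simp)
  have h2 : ∀ᶠ x in nhdsWithin c {c}ᶜ, x ∉ ({x | p.IsRoot x} \ {c} : Set ℝ) :=
    h1.filter_mono nhdsWithin_le_nhds
  have h3 : ∀ᶠ x in nhdsWithin c {c}ᶜ, x ∈ ({c}ᶜ : Set ℝ) := self_mem_nhdsWithin
  filter_upwards [h2, h3] with x hx hxc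
  intro hroot
  exact hx ⟨hroot, hxc⟩

lemma ivt_same_sign (p : Polynomial ℝ) (w y : ℝ) (hwy : w ≤ y)
    (hnv : ∀ z, w ≤ z → z ≤ y → p.eval z ≠ 0) :
    0 < p.eval w * p.eval y := by
  rcases lt_trichotomy (p.eval w * p.eval y) 0 with h | h | h
  · exfalso
    rcases mul_neg_iff.1 h with ⟨h1, h2⟩ | ⟨h1, h2⟩
    · have : (0:ℝ) ∈ Set.Icc (p.eval y) (p.eval w) := ⟨le_of_lt h2, le_of_lt h1⟩
      obtain ⟨z, hz, hz0⟩ := intermediate_value_Icc' hwy (p.continuous.continuousOn)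
        (by exact this)
      exact hnv z hz.1 hz.2 hz0
    · have : (0:ℝ) ∈ Set.Icc (p.eval w) (p.eval y) := ⟨le_of_lt h1, le_of_lt h2⟩
      obtain ⟨z, hz, hz0⟩ := intermediate_value_Icc hwy (p.continuous.continuousOn)
        (by exact this)
      exact hnv z hz.1 hz.2 hz0
  · exfalso
    rcases mul_eq_zero.1 h with h1 | h1
    · exact hnv w le_rfl hwy h1
    · exact hnv y hwy le_rfl h1
  · exact h

lemma ff'_sign (f : Polynomial ℝ) (hf : f ≠ 0) (c : ℝ) (hc : f.eval c = 0) :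
    (∀ᶠ x in nhdsWithin c (Set.Ioi c), 0 < f.eval x * (derivative f).eval x) ∧
    (∀ᶠ x in nhdsWithin c (Set.Iio c), f.eval x * (derivative f).eval x < 0) := by
  set k := rootMultiplicity c f with hkdef
  have hk : 1 ≤ k := (rootMultiplicity_pos hf).2 hc
  obtain ⟨g, hg, hnd⟩ := f.exists_eq_pow_rootMultiplicity_mul_and_not_dvd hf c
  rw [← hkdef] at hg
  have hgc : g.eval c ≠ 0 := by
    intro h; exact hnd (dvd_iff_isRoot.2 h)
  have hder : derivative f = (X - C c)^(k-1) * (C (k:ℝ) * g + (X - C c) * derivative g) := by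
    rw [hg, derivative_mul, derivative_pow, derivative_sub, derivative_X, derivative_C,
      sub_zero, mul_one]
    have e : (X - C c : ℝ[X])^k = (X - C c)^(k-1) * (X - C c) := by
      conv_lhs => rw [show k = (k-1)+1 by omega]
      rw [pow_succ]
    rw [e]
    ring
  set H : Polynomial ℝ := g * (C (k:ℝ) * g + (X - C c) * derivative g) with hH
  have hff : ∀ x, f.eval x * (derivative f).eval x = (x - c)^(2*k-1) * H.eval x := by
    intro x
    rw [hder, hg]
    simp only [eval_mul, eval_pow, eval_sub, eval_X, eval_C, hH, eval_add]
    rw [show 2*k-1 = k + (k-1) by omega, pow_add]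
    ring
  have hHc : 0 < H.eval c := by
    have : H.eval c = (k:ℝ) * (g.eval c)^2 := by
      simp only [hH, eval_mul, eval_add, eval_sub, eval_X, eval_C, sub_self, zero_mul, add_zero]
      ring
    rw [this]
    have : (0:ℝ) < (k:ℝ) := by exact_mod_cast hk
    positivity
  have hH' : ∀ᶠ x in nhds c, 0 < H.eval x := by
    exact continuousAt_const.eventually_lt H.continuous.continuousAt hHc
  have hodd : Odd (2*k-1) := ⟨k-1, by omega⟩
  constructor
  · have h1 : ∀ᶠ x in nhdsWithin c (Set.Ioi c), 0 < H.eval x :=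
      hH'.filter_mono nhdsWithin_le_nhds
    have h2 : ∀ᶠ x in nhdsWithin c (Set.Ioi c), x ∈ Set.Ioi c := self_mem_nhdsWithin
    filter_upwards [h1, h2] with x hx hxc
    rw [hff]
    have : (0:ℝ) < x - c := by simp at hxc; linarith
    positivity
  · have h1 : ∀ᶠ x in nhdsWithin c (Set.Iio c), 0 < H.eval x :=
      hH'.filter_mono nhdsWithin_le_nhds
    have h2 : ∀ᶠ x in nhdsWithin c (Set.Iio c), x ∈ Set.Iio c := self_mem_nhdsWithin
    filter_upwards [h1, h2] with x hx hxc
    rw [hff]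
    have hneg : x - c < 0 := by simp at hxc; linarith
    exact mul_neg_of_neg_of_pos (hodd.pow_neg hneg) hx


lemma walk (V : ℝ → ℕ) (R Z : Set ℝ) (hRfin : R.Finite) (hZR : Z ⊆ R)
    (RC : ∀ c, ∀ᶠ x in nhdsWithin c (Set.Ioi c), V x = V c)
    (LC1 : ∀ c ∈ Z, ∀ᶠ x in nhdsWithin c (Set.Iio c), V x = V c + 1)
    (LC2 : ∀ c, c ∉ Z → ∀ᶠ x in nhdsWithin c (Set.Iio c), V x = V c)
    (CONST : ∀ w y, w ≤ y → (∀ z, w ≤ z → z ≤ y → z ∉ R) → V w = V y) :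
    ∀ N x bb, x ≤ bb → (R ∩ Set.Ioc x bb).ncard ≤ N →
      V x = V bb + (Z ∩ Set.Ioc x bb).ncard := by
  have L1 : ∀ x y, x ≤ y → R ∩ Set.Ioc x y = ∅ → V x = V y := by
    intro x y hxy hempty
    rcases eq_or_lt_of_le hxy with rfl | hlt
    · rfl
    · have h2 : Set.Ioc x y ∈ nhdsWithin x (Set.Ioi x) :=
        Ioc_mem_nhdsGT_of_mem ⟨le_refl x, hlt⟩
      have h2' : ∀ᶠ w in nhdsWithin x (Set.Ioi x), w ∈ Set.Ioc x y := h2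
      obtain ⟨w, hw1, hw2⟩ := ((RC x).and h2').exists
      rw [← hw1]
      refine CONST w y hw2.2 (fun z hz1 hz2 hzR => ?_)
      have : z ∈ R ∩ Set.Ioc x y := ⟨hzR, lt_of_lt_of_le hw2.1 hz1, hz2⟩
      rw [hempty] at this
      exact this
  have Hempty : ∀ x bb, x ≤ bb → R ∩ Set.Ioc x bb = ∅ →
      V x = V bb + (Z ∩ Set.Ioc x bb).ncard := by
    intro x bb hxbb hS
    have hz : Z ∩ Set.Ioc x bb = ∅ := by
      rw [Set.eq_empty_iff_forall_notMem] at hS ⊢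
      exact fun y ⟨hy1, hy2⟩ => hS y ⟨hZR hy1, hy2⟩
    rw [hz, Set.ncard_empty, Nat.add_zero]
    exact L1 x bb hxbb hS
  intro N
  induction N with
  | zero =>
    intro x bb hxbb hcard
    have hSfin : (R ∩ Set.Ioc x bb).Finite := hRfin.subset Set.inter_subset_left
    have hS : R ∩ Set.Ioc x bb = ∅ := by
      rw [← Set.ncard_eq_zero hSfin]; omega
    exact Hempty x bb hxbb hS
  | succ N IH =>
    intro x bb hxbb hcard
    have hSfin : (R ∩ Set.Ioc x bb).Finite := hRfin.subset Set.inter_subset_left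
    by_cases hS : R ∩ Set.Ioc x bb = ∅
    · exact Hempty x bb hxbb hS
    · have hSne : (R ∩ Set.Ioc x bb).Nonempty := Set.nonempty_iff_ne_empty.2 hS
      have hne' : hSfin.toFinset.Nonempty := by
        rwa [Set.Finite.toFinset_nonempty]
      set c := hSfin.toFinset.min' hne' with hcdef
      have hcS : c ∈ R ∩ Set.Ioc x bb := by
        have := hSfin.toFinset.min'_mem hne'
        rwa [Set.Finite.mem_toFinset] at this
      have hmin : ∀ y ∈ R ∩ Set.Ioc x bb, c ≤ y := by
        intro y hy
        exact hSfin.toFinset.min'_le y (by rwa [Set.Finite.mem_toFinset])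
      have hcR := hcS.1
      have hxc := hcS.2.1
      have hcbb := hcS.2.2
      -- induction hypothesis at c
      have hsub : R ∩ Set.Ioc c bb ⊆ (R ∩ Set.Ioc x bb) \ {c} := by
        rintro y ⟨hyR, hy1, hy2⟩
        exact ⟨⟨hyR, lt_trans hxc hy1, hy2⟩, ne_of_gt hy1⟩
      have hcard2 : (R ∩ Set.Ioc c bb).ncard ≤ N := by
        have h1 : (R ∩ Set.Ioc c bb).ncard ≤ ((R ∩ Set.Ioc x bb) \ {c}).ncard :=
          Set.ncard_le_ncard hsub hSfin.diff
        have h2 : ((R ∩ Set.Ioc x bb) \ {c}).ncard = (R ∩ Set.Ioc x bb).ncard - 1 :=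
          Set.ncard_diff_singleton_of_mem hcS
        have h3 : 1 ≤ (R ∩ Set.Ioc x bb).ncard := by
          have := Set.ncard_pos hSfin |>.2 hSne
          omega
        omega
      have hVc : V c = V bb + (Z ∩ Set.Ioc c bb).ncard := IH c bb hcbb hcard2
      -- pick y just left of c
      have hIoo : Set.Ioo x c ∈ nhdsWithin c (Set.Iio c) :=
        Ioo_mem_nhdsLT_of_mem ⟨hxc, le_refl c⟩
      have hIoo' : ∀ᶠ w in nhdsWithin c (Set.Iio c), w ∈ Set.Ioo x c := hIoo
      -- no roots strictly between x and c
      have hnoroot : ∀ z, x < z → z < c → z ∉ R := by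
        intro z hz1 hz2 hzR
        have : c ≤ z := hmin z ⟨hzR, hz1, le_trans (le_of_lt hz2) hcbb⟩
        linarith
      by_cases hcZ : c ∈ Z
      · obtain ⟨y, hy1, hy2⟩ := ((LC1 c hcZ).and hIoo').exists
        have hVxy : V x = V y := by
          refine L1 x y (le_of_lt hy2.1) ?_
          rw [Set.eq_empty_iff_forall_notMem]
          rintro z ⟨hzR, hz1, hz2⟩
          exact hnoroot z hz1 (lt_of_le_of_lt hz2 hy2.2) hzR
        -- counting
        have hZc : Z ∩ Set.Ioc x bb = insert c (Z ∩ Set.Ioc c bb) := by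
          ext w
          constructor
          · rintro ⟨hwZ, hw1, hw2⟩
            rcases lt_trichotomy w c with h | h | h
            · exact absurd (hZR hwZ) (hnoroot w hw1 h)
            · exact Or.inl h
            · exact Or.inr ⟨hwZ, h, hw2⟩
          · rintro (rfl | ⟨hwZ, hw1, hw2⟩)
            · exact ⟨hcZ, hxc, hcbb⟩
            · exact ⟨hwZ, lt_trans hxc hw1, hw2⟩
        have hfinz : (Z ∩ Set.Ioc c bb).Finite := (hRfin.subset hZR).subset Set.inter_subset_left
        have hcnot : c ∉ Z ∩ Set.Ioc c bb := by
          rintro ⟨-, h, -⟩; exact lt_irrefl c h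
        have hcount : (Z ∩ Set.Ioc x bb).ncard = (Z ∩ Set.Ioc c bb).ncard + 1 := by
          rw [hZc, Set.ncard_insert_of_notMem hcnot hfinz]
        rw [hVxy, hy1, hVc, hcount]
        ring
      · obtain ⟨y, hy1, hy2⟩ := ((LC2 c hcZ).and hIoo').exists
        have hVxy : V x = V y := by
          refine L1 x y (le_of_lt hy2.1) ?_
          rw [Set.eq_empty_iff_forall_notMem]
          rintro z ⟨hzR, hz1, hz2⟩
          exact hnoroot z hz1 (lt_of_le_of_lt hz2 hy2.2) hzR
        have hZc : Z ∩ Set.Ioc x bb = Z ∩ Set.Ioc c bb := by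
          ext w
          constructor
          · rintro ⟨hwZ, hw1, hw2⟩
            rcases lt_trichotomy w c with h | h | h
            · exact absurd (hZR hwZ) (hnoroot w hw1 h)
            · exact absurd (h ▸ hwZ) hcZ
            · exact ⟨hwZ, h, hw2⟩
          · rintro ⟨hwZ, hw1, hw2⟩
            exact ⟨hwZ, lt_trans hxc hw1, hw2⟩
        rw [hVxy, hy1, hVc, hZc]
  

end Sturm
/-- **Sturm's Theorem.** -/
theorem stmt19 (f : Polynomial ℝ) (hf : 0 < f.natDegree)
    -- the canonical Sturm chain of f:
    (m : ℕ) (hm : 1 ≤ m)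
    (F d : ℕ → Polynomial ℝ)
    (hF0 : F 0 = f) (hF1 : F 1 = derivative f)
    (hrec : ∀ i, 1 ≤ i → i < m → F (i - 1) = d i * F i - F (i + 1))
    (hdeg : ∀ i, 1 ≤ i → i < m → (F (i + 1)).degree < (F i).degree)
    (hlast : F (m - 1) = d m * F m)
    (hFm : F m ≠ 0)
    -- a < b, neither being a multiple root of f:
    (a b : ℝ) (hab : a < b)
    (ha : ¬(f.eval a = 0 ∧ (derivative f).eval a = 0))
    (hb : ¬(f.eval b = 0 ∧ (derivative f).eval b = 0)) :
    ((Set.ncard {x ∈ Set.Ioc a b | f.eval x = 0} : ℤ))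
      = (signVar (List.ofFn fun i : Fin (m + 1) => (F (i : ℕ)).eval a) : ℤ)
        - (signVar (List.ofFn fun i : Fin (m + 1) => (F (i : ℕ)).eval b) : ℤ) := by
  have hfne : f ≠ 0 := fun h => by simp [h] at hf
  -- divisibility of the whole chain by F m
  have hdvd : ∀ i, i ≤ m → F m ∣ F i := by
    suffices H : ∀ k, ∀ i, m - i ≤ k → i ≤ m → F m ∣ F i by
      intro i hi; exact H (m - i) i le_rfl hi
    intro k
    induction k with
    | zero => intro i h1 h2; have : i = m := by omega
              rw [this]
    | succ k IHk =>
      intro i h1 h2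
      rcases eq_or_lt_of_le h2 with rfl | hlt
      · exact dvd_rfl
      · rcases eq_or_lt_of_le (Nat.succ_le_of_lt hlt) with he | hlt2
        · -- i + 1 = m, i.e. i = m - 1
          have : i = m - 1 := by omega
          rw [this, hlast]
          exact Dvd.intro_left _ rfl
        · -- i + 1 < m
          have hr := hrec (i+1) (by omega) hlt2
          rw [Nat.add_sub_cancel] at hr
          rw [hr]
          exact dvd_sub ((IHk (i+1) (by omega) (by omega)).mul_left _)
            (IHk (i+2) (by omega) (by omega))
  -- nonvanishing of the chain
  have hFne : ∀ i, i ≤ m → F i ≠ 0 := by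
    suffices H : ∀ k, ∀ i, m - i ≤ k → 1 ≤ i → i ≤ m → F i ≠ 0 by
      intro i hi
      rcases Nat.eq_zero_or_pos i with rfl | h1
      · rw [hF0]; exact hfne
      · exact H (m - i) i le_rfl h1 hi
    intro k
    induction k with
    | zero => intro i h1 h2 h3; have : i = m := by omega
              rw [this]; exact hFm
    | succ k IHk =>
      intro i h1 h2 h3
      rcases eq_or_lt_of_le h3 with rfl | hlt
      · exact hFm
      · have hnext : F (i+1) ≠ 0 := IHk (i+1) (by omega) (by omega) (by omega)
        intro h0
        have := hdeg i h2 hlt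
        rw [h0, Polynomial.degree_zero] at this
        exact not_lt_bot this
  -- the reduced chain G
  set G : ℕ → Polynomial ℝ := fun i => F i / F m with hGdef
  have hFG : ∀ i, i ≤ m → F i = F m * G i := fun i hi =>
    (EuclideanDomain.mul_div_cancel' hFm (hdvd i hi)).symm
  have hGm : G m = 1 := by
    have h1 : F m * G m = F m * 1 := by rw [← hFG m le_rfl, mul_one]
    exact mul_left_cancel₀ hFm h1
  have hGrec : ∀ i, 1 ≤ i → i < m → G (i-1) = d i * G i - G (i+1) := by
    intro i h1 h2
    have hr := hrec i h1 h2
    rw [hFG (i-1) (by omega), hFG i (by omega), hFG (i+1) (by omega)] at hr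
    have : F m * G (i-1) = F m * (d i * G i - G (i+1)) := by rw [hr]; ring
    exact mul_left_cancel₀ hFm this
  have hGne : ∀ i, i ≤ m → G i ≠ 0 := by
    intro i hi h
    exact hFne i hi (by rw [hFG i hi, h, mul_zero])
  have hf0 : f = F m * G 0 := by rw [← hF0]; exact hFG 0 (by omega)
  have hf1 : derivative f = F m * G 1 := by rw [← hF1]; exact hFG 1 hm
  have hf'ne : derivative f ≠ 0 := by
    rw [hf1]; exact mul_ne_zero hFm (hGne 1 hm)
  -- roots of G 0 are exactly the roots of f
  have rootG0_iff : ∀ c : ℝ, (G 0).eval c = 0 ↔ f.eval c = 0 := by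
    intro c
    constructor
    · intro h; rw [hf0, Polynomial.eval_mul, h, mul_zero]
    · intro hc
      have hk : 1 ≤ rootMultiplicity c f := (Polynomial.rootMultiplicity_pos hfne).2 hc
      have hmul : rootMultiplicity c f
          = rootMultiplicity c (F m) + rootMultiplicity c (G 0) := by
        rw [hf0]
        exact Polynomial.rootMultiplicity_mul (by rw [← hf0]; exact hfne)
      have hd' : rootMultiplicity c (derivative f) = rootMultiplicity c f - 1 :=
        Polynomial.derivative_rootMultiplicity_of_root hc
      have hle : rootMultiplicity c (F m) ≤ rootMultiplicity c (derivative f) := by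
        rw [Polynomial.le_rootMultiplicity_iff hf'ne]
        exact dvd_trans (Polynomial.pow_rootMultiplicity_dvd (F m) c)
          (by rw [hf1]; exact Dvd.intro _ rfl)
      have : 0 < rootMultiplicity c (G 0) := by omega
      exact (Polynomial.rootMultiplicity_pos (hGne 0 (by omega))).1 this
  -- the variation function of the reduced chain
  set V : ℝ → ℕ := fun x => signVar (Sturm.lst m (fun i => (G i).eval x)) with hVdef
  -- root sets
  set R : Set ℝ := ⋃ i ∈ Finset.range (m+1), {x : ℝ | (G i).eval x = 0} with hRdef
  set Z : Set ℝ := {x : ℝ | (G 0).eval x = 0} with hZdef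
  have hmemR : ∀ x : ℝ, x ∈ R ↔ ∃ i, i ≤ m ∧ (G i).eval x = 0 := by
    intro x
    simp only [hRdef, Set.mem_iUnion, Set.mem_setOf_eq, Finset.mem_range]
    constructor
    · rintro ⟨i, hi, h⟩; exact ⟨i, by omega, h⟩
    · rintro ⟨i, hi, h⟩; exact ⟨i, by omega, h⟩
  have hRfin : R.Finite := by
    refine Set.Finite.biUnion (Finset.range (m+1)).finite_toSet (fun i hi => ?_)
    have : i ≤ m := by simpa [Nat.lt_succ_iff] using hi
    exact Polynomial.finite_setOf_isRoot (hGne i this)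
  have hZR : Z ⊆ R := fun x hx => (hmemR x).2 ⟨0, by omega, hx⟩
  -- interior zeros have opposite neighbours
  have hz_at : ∀ c : ℝ, ∀ i, 1 ≤ i → i ≤ m → (G i).eval c = 0 →
      i < m ∧ (G (i-1)).eval c * (G (i+1)).eval c < 0 :=
    fun c => Sturm.interiorZero m G d hGm hGrec c
  -- eventual nonvanishing and sign-preservation near any point
  have hmono_gt : ∀ c : ℝ, nhdsWithin c (Set.Ioi c) ≤ nhdsWithin c ({c}ᶜ : Set ℝ) :=
    fun c => nhdsWithin_mono c (fun x hx => ne_of_gt hx)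
  have hmono_lt : ∀ c : ℝ, nhdsWithin c (Set.Iio c) ≤ nhdsWithin c ({c}ᶜ : Set ℝ) :=
    fun c => nhdsWithin_mono c (fun x hx => ne_of_lt hx)
  have hE1 : ∀ c : ℝ, ∀ᶠ x in nhdsWithin c ({c}ᶜ : Set ℝ),
      ∀ i ∈ Finset.range (m+1), (G i).eval x ≠ 0 := by
    intro c
    rw [Filter.eventually_all_finset]
    intro i hi
    exact Sturm.eventually_ne_root (G i) (hGne i (by simpa [Nat.lt_succ_iff] using hi)) c
  have hE2 : ∀ c : ℝ, ∀ᶠ x in nhds c,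
      ∀ i ∈ Finset.range (m+1), ((G i).eval c ≠ 0 → 0 < (G i).eval x * (G i).eval c) := by
    intro c
    rw [Filter.eventually_all_finset]
    intro i hi
    by_cases h : (G i).eval c = 0
    · exact Filter.Eventually.of_forall (fun x h' => absurd h h')
    · exact (Sturm.eventually_sign (G i) c h).mono (fun x hx _ => hx)
  -- sign of G0 * G1 near a root of G0
  have hE3r : ∀ c : ℝ, (G 0).eval c = 0 →
      ∀ᶠ x in nhdsWithin c (Set.Ioi c), 0 < (G 0).eval x * (G 1).eval x := by
    intro c hc
    have hff := (Sturm.ff'_sign f hfne c ((rootG0_iff c).1 hc)).1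
    have hFm' : ∀ᶠ x in nhdsWithin c (Set.Ioi c), (F m).eval x ≠ 0 :=
      (Sturm.eventually_ne_root (F m) hFm c).filter_mono (hmono_gt c)
    filter_upwards [hff, hFm'] with x h1 h2
    rw [hf1, hf0, Polynomial.eval_mul, Polynomial.eval_mul] at h1
    nlinarith [mul_self_pos.2 h2]
  have hE3l : ∀ c : ℝ, (G 0).eval c = 0 →
      ∀ᶠ x in nhdsWithin c (Set.Iio c), (G 0).eval x * (G 1).eval x < 0 := by
    intro c hc
    have hff := (Sturm.ff'_sign f hfne c ((rootG0_iff c).1 hc)).2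
    have hFm' : ∀ᶠ x in nhdsWithin c (Set.Iio c), (F m).eval x ≠ 0 :=
      (Sturm.eventually_ne_root (F m) hFm c).filter_mono (hmono_lt c)
    filter_upwards [hff, hFm'] with x h1 h2
    rw [hf1, hf0, Polynomial.eval_mul, Polynomial.eval_mul] at h1
    nlinarith [mul_self_pos.2 h2]
  -- right continuity of V
  have RC : ∀ c : ℝ, ∀ᶠ x in nhdsWithin c (Set.Ioi c), V x = V c := by
    intro c
    have e1 := (hE1 c).filter_mono (hmono_gt c)
    have e2 := (hE2 c).filter_mono (nhdsWithin_le_nhds (s := Set.Ioi c))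
    have e3 : ∀ᶠ x in nhdsWithin c (Set.Ioi c),
        ((G 0).eval c = 0 → 0 < (G 0).eval x * (G 1).eval x) := by
      by_cases h : (G 0).eval c = 0
      · exact (hE3r c h).mono (fun x hx _ => hx)
      · exact Filter.Eventually.of_forall (fun x h' => absurd h' h)
    filter_upwards [e1, e2, e3] with x hx1 hx2 hx3
    refine (Sturm.varCompare_right m hm (fun i => (G i).eval c) (fun i => (G i).eval x)
      (fun i hi => hx1 i (by simp [Nat.lt_succ_iff, hi]))
      (fun i hi h => by
        have := hx2 i (by simp [Nat.lt_succ_iff, hi]) h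
        linarith [mul_comm ((G i).eval x) ((G i).eval c) ▸ this])
      (fun i h1 h2 h => hz_at c i h1 h2 h)
      hx3).symm
  -- left jump of V
  have LC1 : ∀ c ∈ Z, ∀ᶠ x in nhdsWithin c (Set.Iio c), V x = V c + 1 := by
    intro c hcZ
    have e1 := (hE1 c).filter_mono (hmono_lt c)
    have e2 := (hE2 c).filter_mono (nhdsWithin_le_nhds (s := Set.Iio c))
    have e3 := hE3l c hcZ
    filter_upwards [e1, e2, e3] with x hx1 hx2 hx3
    have := Sturm.varCompare_left m hm (fun i => (G i).eval c) (fun i => (G i).eval x)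
      (fun i hi => hx1 i (by simp [Nat.lt_succ_iff, hi]))
      (fun i hi h => by
        have := hx2 i (by simp [Nat.lt_succ_iff, hi]) h
        linarith [mul_comm ((G i).eval x) ((G i).eval c) ▸ this])
      (fun i h1 h2 h => hz_at c i h1 h2 h)
      (fun _ => hx3)
    rw [if_pos (show (fun i => (G i).eval c) 0 = 0 from hcZ)] at this
    exact this
  have LC2 : ∀ c : ℝ, c ∉ Z → ∀ᶠ x in nhdsWithin c (Set.Iio c), V x = V c := by
    intro c hcZ
    have e1 := (hE1 c).filter_mono (hmono_lt c)
    have e2 := (hE2 c).filter_mono (nhdsWithin_le_nhds (s := Set.Iio c))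
    filter_upwards [e1, e2] with x hx1 hx2
    have := Sturm.varCompare_left m hm (fun i => (G i).eval c) (fun i => (G i).eval x)
      (fun i hi => hx1 i (by simp [Nat.lt_succ_iff, hi]))
      (fun i hi h => by
        have := hx2 i (by simp [Nat.lt_succ_iff, hi]) h
        linarith [mul_comm ((G i).eval x) ((G i).eval c) ▸ this])
      (fun i h1 h2 h => hz_at c i h1 h2 h)
      (fun h => absurd h hcZ)
    rw [if_neg (show ¬ (fun i => (G i).eval c) 0 = 0 from hcZ), Nat.add_zero] at this
    exact this
  -- constancy of V on root-free closed intervals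
  have CONST : ∀ w y : ℝ, w ≤ y → (∀ z, w ≤ z → z ≤ y → z ∉ R) → V w = V y := by
    intro w y hwy hno
    have hnv : ∀ i, i ≤ m → ∀ z, w ≤ z → z ≤ y → (G i).eval z ≠ 0 := by
      intro i hi z h1 h2 h
      exact hno z h1 h2 ((hmemR z).2 ⟨i, hi, h⟩)
    refine Sturm.core m (fun i => (G i).eval w) (fun i => (G i).eval y)
      (hnv 0 (by omega) w le_rfl hwy)
      (fun i hi => hnv i hi y hwy le_rfl)
      (fun i hi h => Sturm.ivt_same_sign (G i) w y hwy (fun z h1 h2 => hnv i hi z h1 h2))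
      (fun i h1 h2 h => absurd h (hnv i h2 w le_rfl hwy))
  -- the walking argument
  have hwalk := Sturm.walk V R Z hRfin hZR RC LC1 LC2 CONST
    ((R ∩ Set.Ioc a b).ncard) a b (le_of_lt hab) le_rfl
  -- identify the root-counting sets
  have hsets : {x ∈ Set.Ioc a b | f.eval x = 0} = Z ∩ Set.Ioc a b := by
    ext x
    simp only [Set.mem_setOf_eq, Set.mem_inter_iff, hZdef, rootG0_iff]
    tauto
  -- endpoint translation: F-chain variations equal G-chain variations
  have hFma : (F m).eval a ≠ 0 := by
    intro h
    exact ha ⟨by rw [hf0, Polynomial.eval_mul, h, zero_mul],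
              by rw [hf1, Polynomial.eval_mul, h, zero_mul]⟩
  have hFmb : (F m).eval b ≠ 0 := by
    intro h
    exact hb ⟨by rw [hf0, Polynomial.eval_mul, h, zero_mul],
              by rw [hf1, Polynomial.eval_mul, h, zero_mul]⟩
  have hend : ∀ x : ℝ, (F m).eval x ≠ 0 →
      signVar (List.ofFn fun i : Fin (m + 1) => (F (i : ℕ)).eval x) = V x := by
    intro x hx
    have hlist : (List.ofFn fun i : Fin (m + 1) => (F (i : ℕ)).eval x)
        = (Sturm.lst m (fun i => (G i).eval x)).map ((F m).eval x * ·) := by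
      rw [Sturm.lst, List.map_ofFn]
      congr 1
      funext i
      show (F i).eval x = (F m).eval x * (G i).eval x
      rw [hFG i (Nat.lt_succ_iff.1 i.isLt), Polynomial.eval_mul]
    rw [hlist, Sturm.signVar_map_mul _ hx]
  rw [hsets, hend a hFma, hend b hFmb]
  rw [hwalk]
  push_cast
  ring
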